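/- For the cycle graph C_n with n ≥ 4 and any k ≥ 1, fμᵏ(C_n) = 2. Moreover, for k ≥ 2, any maximum k-ftmv set consists of two adjacent vertices. -/

import Mathlib

open SimpleGraph

variable {V : Type*}

/-- `X` is a `k`-fault-tolerant mutual-visibility set of `G`: for any two distinct
non-adjacent vertices `u v ∈ X` there are `k+1` internally disjoint shortest
`u,v`-paths whose only vertices in `X` are `u` and `v`. -/
def IsFtmvSet (G : SimpleGraph V) (k : ℕ) (X : Set V) : Prop :=
  ∀ u ∈ X, ∀ v ∈ X, u ≠ v → ¬ G.Adj u v →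
    ∃ P : Fin (k + 1) → G.Path u v,
      (∀ i, (P i).1.length = G.dist u v) ∧
      (∀ i, ∀ w ∈ (P i).1.support, w ∈ X → w = u ∨ w = v) ∧
      (∀ i j, i ≠ j → ∀ w, w ∈ (P i).1.support → w ∈ (P j).1.support → w = u ∨ w = v)

/-- The `k`-fault-tolerant mutual-visibility number: maximum cardinality of a `k`-ftmv set. -/
noncomputable def ftmvNum (G : SimpleGraph V) (k : ℕ) : ℕ :=
  sSup {n | ∃ X : Set V, IsFtmvSet G k X ∧ X.ncard = n}

/-- The clique number of `G`. -/
noncomputable def cliqueNum' (G : SimpleGraph V) : ℕ :=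
  sSup {n | ∃ s : Finset V, G.IsNClique n s}

open scoped Fin.NatCast Fin.CommRing

lemma cyc_adj {n : ℕ} [NeZero n] (hn : 2 ≤ n) {u v : Fin n} :
    (cycleGraph n).Adj u v ↔ u = v + 1 ∨ v = u + 1 := by
  have h1 : ((1 : Fin n)).val = 1 := by
    rw [Fin.val_one']; exact Nat.mod_eq_of_lt (by omega)
  have key : ∀ a b : Fin n, ((a - b).val = 1) ↔ a = b + 1 := by
    intro a b
    rw [show (1:ℕ) = ((1:Fin n)).val from h1.symm, ← Fin.ext_iff, sub_eq_iff_eq_add, add_comm]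
  rw [cycleGraph_adj', key, key]

lemma fin_cast_ne_zero {n m : ℕ} [NeZero n] (h0 : 0 < m) (hm : m < n) :
    ((m : ℕ) : Fin n) ≠ 0 := by
  intro h
  rw [Fin.natCast_eq_zero] at h
  exact absurd (Nat.le_of_dvd h0 h) (by omega)

lemma chain_spec {n : ℕ} [NeZero n] (c : Fin n) {u v : Fin n}
    (W : (cycleGraph n).Walk u v) :
    W.support.Chain' (fun x y => y = x + c) →
      v = u + (W.length : Fin n) * c ∧
        ∀ m : ℕ, m ≤ W.length → u + (m : Fin n) * c ∈ W.support := by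
  induction W with
  | nil =>
    intro _
    refine ⟨by simp, ?_⟩
    intro m hm
    have hm0 : m = 0 := by simpa using hm
    subst hm0
    simp
  | @cons a b d h p ih =>
    intro hch
    rw [Walk.support_cons, p.support_eq_cons, List.Chain', List.isChain_cons_cons] at hch
    obtain ⟨hb, hch⟩ := hch
    rw [← p.support_eq_cons] at hch
    obtain ⟨hv, hmem⟩ := ih hch
    subst hb
    constructor
    · rw [Walk.length_cons]
      push_cast
      linear_combination hv
    · intro m hm
      rw [Walk.support_cons]
      match m with
      | 0 => simp
      | Nat.succ m =>
        have e : a + ((m + 1 : ℕ) : Fin n) * c = (a + c) + ((m : ℕ) : Fin n) * c := by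
          push_cast; ring
        rw [e]
        exact List.mem_cons_of_mem _ (hmem m (by rw [Walk.length_cons] at hm; omega))

lemma path_dir {n : ℕ} [NeZero n] (hn : 2 ≤ n) {u v : Fin n} (W : (cycleGraph n).Walk u v) :
    W.IsPath →
      W.support.Chain' (fun x y => y = x + 1) ∨
        W.support.Chain' (fun x y => y = x + (-1)) := by
  induction W with
  | nil => intro _; left; exact List.isChain_singleton _
  | @cons a b d h p ih =>
    intro hW
    rw [Walk.cons_isPath_iff] at hW
    obtain ⟨hp, ha⟩ := hW
    obtain ⟨t, ht⟩ : ∃ t, p.support = b :: t := ⟨_, p.support_eq_cons⟩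
    rcases (cyc_adj hn).mp h with hb | hb
    · -- a = b + 1, so b = a - 1 : direction must be minus
      rcases ih hp with hc | hc
      · cases t with
        | nil =>
          right
          rw [Walk.support_cons, ht, List.Chain', List.isChain_cons_cons]
          exact ⟨by linear_combination -hb, List.isChain_singleton _⟩
        | cons b2 t' =>
          exfalso
          rw [ht, List.Chain', List.isChain_cons_cons] at hc
          apply ha
          rw [ht]
          have hba : b2 = a := by linear_combination hc.1 - hb
          rw [← hba]
          exact List.mem_cons_of_mem _ List.mem_cons_self
      · right
        rw [Walk.support_cons, ht, List.Chain', List.isChain_cons_cons]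
        refine ⟨by linear_combination -hb, ?_⟩
        rw [← ht]; exact hc
    · -- b = a + 1 : direction must be plus
      rcases ih hp with hc | hc
      · left
        rw [Walk.support_cons, ht, List.Chain', List.isChain_cons_cons]
        refine ⟨hb, ?_⟩
        rw [← ht]; exact hc
      · cases t with
        | nil =>
          left
          rw [Walk.support_cons, ht, List.Chain', List.isChain_cons_cons]
          exact ⟨hb, List.isChain_singleton _⟩
        | cons b2 t' =>
          exfalso
          rw [ht, List.Chain', List.isChain_cons_cons] at hc
          apply ha
          rw [ht]
          have hba : b2 = a := by linear_combination hc.1 + hb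
          rw [← hba]
          exact List.mem_cons_of_mem _ List.mem_cons_self

lemma same_dir {n : ℕ} [NeZero n] (hn : 2 ≤ n) {u v : Fin n} (hne : u ≠ v)
    (hnadj : ¬ (cycleGraph n).Adj u v) (c : Fin n) (hc : c = 1 ∨ c = -1)
    {P Q : (cycleGraph n).Walk u v}
    (hP : P.support.Chain' (fun x y => y = x + c))
    (hQ : Q.support.Chain' (fun x y => y = x + c))
    (hdisj : ∀ w, w ∈ P.support → w ∈ Q.support → w = u ∨ w = v) : False := by
  obtain ⟨hvP, hmP⟩ := chain_spec c P hP
  obtain ⟨hvQ, hmQ⟩ := chain_spec c Q hQ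
  have hLP : 1 ≤ P.length := by
    by_contra hh
    push_neg at hh
    have h0 : P.length = 0 := by omega
    apply hne
    have : v = u := by rw [hvP, h0]; simp
    exact this.symm
  have hLQ : 1 ≤ Q.length := by
    by_contra hh
    push_neg at hh
    have h0 : Q.length = 0 := by omega
    apply hne
    have : v = u := by rw [hvQ, h0]; simp
    exact this.symm
  have h1 : u + c ∈ P.support := by
    have := hmP 1 hLP; simpa using this
  have h2 : u + c ∈ Q.support := by
    have := hmQ 1 hLQ; simpa using this
  rcases hdisj _ h1 h2 with h | h
  · have hc0 : c = 0 := by linear_combination h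
    have h10 : (1 : Fin n) ≠ 0 := by
      have := fin_cast_ne_zero (n := n) (m := 1) (by omega) (by omega)
      simpa using this
    rcases hc with h' | h'
    · exact h10 (by rw [← h']; exact hc0)
    · exact h10 (by linear_combination h' - hc0)
  · apply hnadj
    rw [cyc_adj hn]
    rcases hc with h' | h'
    · right; rw [← h, h']
    · left; linear_combination h - h'

lemma cover {n : ℕ} [NeZero n] (hn : 2 ≤ n) {u v : Fin n} (hne : u ≠ v)
    (hnadj : ¬ (cycleGraph n).Adj u v)
    {P Q : (cycleGraph n).Walk u v} (hPp : P.IsPath)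
    (hP : P.support.Chain' (fun x y => y = x + 1))
    (hQ : Q.support.Chain' (fun x y => y = x + (-1)))
    (hl : P.length = Q.length) :
    ∀ x : Fin n, x ∈ P.support ∨ x ∈ Q.support := by
  obtain ⟨hvP, hmP⟩ := chain_spec 1 P hP
  obtain ⟨hvQ, hmQ⟩ := chain_spec (-1) Q hQ
  obtain ⟨d, hd⟩ : ∃ d, P.length = d := ⟨_, rfl⟩
  rw [hd] at hvP hmP
  rw [← hl, hd] at hvQ hmQ
  have hdn : d + 1 ≤ n := by
    have h1 : P.support.length = d + 1 := by rw [Walk.length_support, hd]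
    have h2 := hPp.support_nodup.length_le_card
    rw [h1] at h2
    simpa using h2
  have hd2 : 2 ≤ d := by
    rcases le_or_gt 2 d with h | h
    · exact h
    · exfalso
      interval_cases d
      · apply hne
        have : v = u := by rw [hvP]; simp
        exact this.symm
      · apply hnadj
        rw [cyc_adj hn]
        right
        rw [hvP]; push_cast; ring
  have hsum : ((d + d : ℕ) : Fin n) = 0 := by
    push_cast
    linear_combination hvQ - hvP
  rw [Fin.natCast_eq_zero] at hsum
  obtain ⟨q, hq⟩ := hsum
  have h2d : d + d = n := by
    rcases q with _ | _ | q
    · simp at hq; omega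
    · omega
    · exfalso
      have hmul : n * 2 ≤ n * (q + 2) := Nat.mul_le_mul_left n (by omega)
      linarith
  intro x
  obtain ⟨m, hm1, hm2⟩ : ∃ m : ℕ, ((m : ℕ) : Fin n) = x - u ∧ m < n :=
    ⟨(x - u).val, Fin.cast_val_eq_self _, (x - u).isLt⟩
  have hx : x = u + ((m : ℕ) : Fin n) * 1 := by rw [hm1]; ring
  rcases le_or_gt m d with h | h
  · left
    rw [hx]
    exact hmP m h
  · right
    have key : ((m : ℕ) : Fin n) = (((n - m : ℕ) : ℕ) : Fin n) * (-1) := by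
      have hz : ((m : ℕ) : Fin n) + (((n - m : ℕ) : ℕ) : Fin n) = 0 := by
        rw [← Nat.cast_add, show m + (n - m) = n from by omega, Fin.natCast_self]
      linear_combination hz
    have hx' : x = u + (((n - m : ℕ) : ℕ) : Fin n) * (-1) := by
      rw [hx, key]; ring
    rw [hx']
    exact hmQ (n - m) (by omega)

lemma no_tri {n : ℕ} [NeZero n] (hn : 4 ≤ n) {a b c : Fin n}
    (h1 : (cycleGraph n).Adj a b) (h2 : (cycleGraph n).Adj b c)
    (h3 : (cycleGraph n).Adj a c) : False := by
  have c1 : (1 : Fin n) ≠ 0 := by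
    have := fin_cast_ne_zero (n := n) (m := 1) (by omega) (by omega)
    simpa using this
  have c3 : (3 : Fin n) ≠ 0 := by
    have := fin_cast_ne_zero (n := n) (m := 3) (by omega) (by omega)
    push_cast at this
    exact this
  rw [cyc_adj (by omega)] at h1 h2 h3
  rcases h1 with h1 | h1 <;> rcases h2 with h2 | h2 <;> rcases h3 with h3 | h3 <;>
    first
      | exact c1 (by linear_combination -h1 - h2 + h3)
      | exact c1 (by linear_combination -h1 + h2 - h3)
      | exact c1 (by linear_combination h1 - h2 - h3)
      | exact c3 (by linear_combination -h1 - h2 - h3)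
      | exact c1 (by linear_combination h1 + h2 - h3)
      | exact c1 (by linear_combination h1 - h2 + h3)
      | exact c1 (by linear_combination -h1 + h2 + h3)
      | exact c3 (by linear_combination h1 + h2 + h3)


lemma ftmv_nonadj_third {n k : ℕ} [NeZero n] (hn : 4 ≤ n) (hk : 1 ≤ k)
    {X : Set (Fin n)} (hX : IsFtmvSet (cycleGraph n) k X)
    {x y z : Fin n} (hx : x ∈ X) (hy : y ∈ X) (hz : z ∈ X)
    (hxy : x ≠ y) (hzx : z ≠ x) (hzy : z ≠ y)
    (hnadj : ¬ (cycleGraph n).Adj x y) : False := by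
  obtain ⟨P, hlen, hmem, hdisj⟩ := hX x hx y hy hxy hnadj
  have hn2 : 2 ≤ n := by omega
  set i0 : Fin (k + 1) := ⟨0, by omega⟩ with hi0
  set i1 : Fin (k + 1) := ⟨1, by omega⟩ with hi1
  have hne01 : i0 ≠ i1 := by
    intro hh
    have := congrArg Fin.val hh
    simp [hi0, hi1] at this
  rcases path_dir hn2 (P i0).1 (P i0).2 with h0 | h0 <;>
    rcases path_dir hn2 (P i1).1 (P i1).2 with h1 | h1
  · exact same_dir hn2 hxy hnadj 1 (Or.inl rfl) h0 h1 (hdisj i0 i1 hne01)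
  · have hl : (P i0).1.length = (P i1).1.length := (hlen i0).trans (hlen i1).symm
    rcases cover hn2 hxy hnadj (P i0).2 h0 h1 hl z with h | h
    · rcases hmem i0 z h hz with rfl | rfl
      · exact hzx rfl
      · exact hzy rfl
    · rcases hmem i1 z h hz with rfl | rfl
      · exact hzx rfl
      · exact hzy rfl
  · have hl : (P i1).1.length = (P i0).1.length := (hlen i1).trans (hlen i0).symm
    rcases cover hn2 hxy hnadj (P i1).2 h1 h0 hl z with h | h
    · rcases hmem i1 z h hz with rfl | rfl
      · exact hzx rfl
      · exact hzy rfl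
    · rcases hmem i0 z h hz with rfl | rfl
      · exact hzx rfl
      · exact hzy rfl
  · exact same_dir hn2 hxy hnadj (-1) (Or.inr rfl) h0 h1 (hdisj i0 i1 hne01)

lemma ftmv_card_le {n k : ℕ} (hn : 4 ≤ n) (hk : 1 ≤ k)
    {X : Set (Fin n)} (hX : IsFtmvSet (cycleGraph n) k X) : X.ncard ≤ 2 := by
  haveI : NeZero n := ⟨by omega⟩
  haveI : Fintype ↑X := (Set.toFinite X).fintype
  by_contra hcard
  push_neg at hcard
  have h3 : 3 ≤ X.toFinset.card := by
    rw [Set.ncard_eq_toFinset_card'] at hcard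
    omega
  obtain ⟨t, hts, htc⟩ := Finset.exists_subset_card_eq h3
  rw [Finset.card_eq_three] at htc
  obtain ⟨a, b, c, hab, hac, hbc, rfl⟩ := htc
  have ha : a ∈ X := by
    have := hts (by simp : a ∈ ({a, b, c} : Finset (Fin n)))
    rwa [Set.mem_toFinset] at this
  have hb : b ∈ X := by
    have := hts (by simp : b ∈ ({a, b, c} : Finset (Fin n)))
    rwa [Set.mem_toFinset] at this
  have hc : c ∈ X := by
    have := hts (by simp : c ∈ ({a, b, c} : Finset (Fin n)))
    rwa [Set.mem_toFinset] at this
  by_cases e1 : (cycleGraph n).Adj a b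
  · by_cases e2 : (cycleGraph n).Adj b c
    · by_cases e3 : (cycleGraph n).Adj a c
      · exact no_tri hn e1 e2 e3
      · exact ftmv_nonadj_third hn hk hX ha hc hb hac hab.symm hbc e3
    · exact ftmv_nonadj_third hn hk hX hb hc ha hbc hab hac e2
  · exact ftmv_nonadj_third hn hk hX ha hb hc hab hac.symm hbc.symm e1

theorem stmt12 (n : ℕ) (hn : 4 ≤ n) (k : ℕ) (hk : 1 ≤ k) :
    ftmvNum (cycleGraph n) k = 2 ∧
    (2 ≤ k → ∀ X : Set (Fin n), IsFtmvSet (cycleGraph n) k X → X.ncard = 2 →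
      ∃ u v : Fin n, (cycleGraph n).Adj u v ∧ X = {u, v}) := by
  haveI : NeZero n := ⟨by omega⟩
  have hn2 : 2 ≤ n := by omega
  have h01 : (0 : Fin n) ≠ 1 := by
    have := fin_cast_ne_zero (n := n) (m := 1) (by omega) (by omega)
    push_cast at this
    exact this.symm
  have adj01 : (cycleGraph n).Adj 0 1 := by
    rw [cyc_adj hn2]
    right
    rw [zero_add]
  constructor
  · -- ftmvNum = 2
    have hmem : 2 ∈ {m | ∃ X : Set (Fin n), IsFtmvSet (cycleGraph n) k X ∧ X.ncard = m} := by
      refine ⟨{0, 1}, ?_, Set.ncard_pair h01⟩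
      intro a ha b hb hab hnadj
      exfalso
      apply hnadj
      simp only [Set.mem_insert_iff, Set.mem_singleton_iff] at ha hb
      rcases ha with rfl | rfl <;> rcases hb with rfl | rfl
      · exact absurd rfl hab
      · exact adj01
      · exact adj01.symm
      · exact absurd rfl hab
    have hub : ∀ m ∈ {m | ∃ X : Set (Fin n), IsFtmvSet (cycleGraph n) k X ∧ X.ncard = m},
        m ≤ 2 := by
      rintro m ⟨X, hX, rfl⟩
      exact ftmv_card_le hn hk hX
    refine le_antisymm (csSup_le ⟨2, hmem⟩ hub) (le_csSup ⟨2, hub⟩ hmem)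
  · -- k ≥ 2 : the two vertices are adjacent
    intro hk2 X hX hcard
    rw [Set.ncard_eq_two] at hcard
    obtain ⟨u, v, huv, rfl⟩ := hcard
    refine ⟨u, v, ?_, rfl⟩
    by_contra hnadj
    obtain ⟨P, hlen, hmem, hdisj⟩ :=
      hX u (by simp) v (by simp) huv hnadj
    set i0 : Fin (k + 1) := ⟨0, by omega⟩ with hi0
    set i1 : Fin (k + 1) := ⟨1, by omega⟩ with hi1
    set i2 : Fin (k + 1) := ⟨2, by omega⟩ with hi2
    have hne01 : i0 ≠ i1 := by
      intro hh; have := congrArg Fin.val hh; simp [hi0, hi1] at this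
    have hne02 : i0 ≠ i2 := by
      intro hh; have := congrArg Fin.val hh; simp [hi0, hi2] at this
    have hne12 : i1 ≠ i2 := by
      intro hh; have := congrArg Fin.val hh; simp [hi1, hi2] at this
    rcases path_dir hn2 (P i0).1 (P i0).2 with h0 | h0 <;>
      rcases path_dir hn2 (P i1).1 (P i1).2 with h1 | h1 <;>
        rcases path_dir hn2 (P i2).1 (P i2).2 with h2 | h2 <;>
          first
            | exact same_dir hn2 huv hnadj 1 (Or.inl rfl) h0 h1 (hdisj i0 i1 hne01)
            | exact same_dir hn2 huv hnadj 1 (Or.inl rfl) h0 h2 (hdisj i0 i2 hne02)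
            | exact same_dir hn2 huv hnadj 1 (Or.inl rfl) h1 h2 (hdisj i1 i2 hne12)
            | exact same_dir hn2 huv hnadj (-1) (Or.inr rfl) h0 h1 (hdisj i0 i1 hne01)
            | exact same_dir hn2 huv hnadj (-1) (Or.inr rfl) h0 h2 (hdisj i0 i2 hne02)
            | exact same_dir hn2 huv hnadj (-1) (Or.inr rfl) h1 h2 (hdisj i1 i2 hne12)
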